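/- Prompt-only recovery bound (ε = 0 case): if corrective interventions can only change the activation status of ingredients in a set P ⊆ Fin k, so that for every ingredient i ∉ P the recovered state agrees with the drifted state on whether gᵢ is active, and 𝒟 = F(s_ref) △ F(s_drift) is nonempty, then the recovery ratio R = 1 − d(s_recov, s_ref)/d(s_drift, s_ref) satisfies R ≤ |P ∩ 𝒟| / |𝒟|, where d(x,y) = |F(x) △ F(y)| / k. -/

import Mathlib

open scoped symmDiff

theorem prompt_only_recovery_bound {S : Type*} {k : ℕ}
    (g : Fin k → S → Prop) [∀ i x, Decidable (g i x)]
    (sref sdrift srecov : S) (P : Finset (Fin k))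
    (F : S → Finset (Fin k))
    (hF : ∀ x, F x = Finset.univ.filter (fun i => g i x))
    (hP : ∀ i ∉ P, (g i srecov ↔ g i sdrift))
    (hD : (F sref ∆ F sdrift).Nonempty) :
    1 - (((F srecov ∆ F sref).card : ℚ) / k) / (((F sdrift ∆ F sref).card : ℚ) / k)
      ≤ ((P ∩ (F sref ∆ F sdrift)).card : ℚ) / ((F sref ∆ F sdrift).card : ℚ) := by
  obtain ⟨i0, _⟩ := hD
  have hk : (k : ℚ) ≠ 0 := by
    have : 0 < k := i0.pos
    exact_mod_cast this.ne'
  set D := F sref ∆ F sdrift with hDdef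
  have hDc : 0 < (D.card : ℚ) := by
    have : 0 < D.card := Finset.card_pos.mpr ⟨i0, ‹i0 ∈ D›⟩
    exact_mod_cast this
  have hcomm : (F sdrift ∆ F sref) = D := symmDiff_comm _ _
  -- key set inclusion
  have hsub : D \ P ⊆ F srecov ∆ F sref := by
    intro i hi
    rw [Finset.mem_sdiff] at hi
    obtain ⟨hiD, hiP⟩ := hi
    have hrec : g i srecov ↔ g i sdrift := hP i hiP
    rw [hDdef, Finset.mem_symmDiff] at hiD
    rw [Finset.mem_symmDiff]
    simp only [hF, Finset.mem_filter, Finset.mem_univ, true_and] at hiD ⊢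
    tauto
  have hcard : D.card ≤ (P ∩ D).card + (F srecov ∆ F sref).card := by
    have h1 : D.card = (D ∩ P).card + (D \ P).card :=
      (Finset.card_inter_add_card_sdiff D P).symm
    have h2 : (D \ P).card ≤ (F srecov ∆ F sref).card := Finset.card_le_card hsub
    rw [Finset.inter_comm] at h1
    omega
  have hcardQ : (D.card : ℚ) ≤ (P ∩ D).card + (F srecov ∆ F sref).card := by
    exact_mod_cast hcard
  rw [hcomm]
  have heq : ((F srecov ∆ F sref).card : ℚ) / k / ((D.card : ℚ) / k)
      = ((F srecov ∆ F sref).card : ℚ) / D.card := by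
    rw [div_div_div_comm, div_self hk, div_one]
  rw [heq]
  rw [sub_le_iff_le_add, ← add_div, le_div_iff₀ hDc, one_mul]
  exact hcardQ
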